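/- arXiv:0807.0147 — 4 statements merged into one kernel-verified Lean document; each statement's English description precedes it below -/
import Mathlib

section
/- Let f : ℕ → ℕ with f(n) ≥ 2 for all n. Define the colouring c on nonempty finite sequences s (with s(i) < f(i)) by c(s) = 0 iff s(|s|−1) < ⌊f(|s|−1)/2⌋. If T is a subtree of the tree of f-bounded finite sequences and F is a finite set of levels on which T is homogeneous for c (i.e., c is constant on T(n) for each n ∈ F), then |T(max(F)+1)| / ∏_{i < max(F)+1} f(i) ≤ (2/3)^{|F|}. -/
/-- `T` is a subtree of the tree `seq f` of all `f`-bounded finite sequences: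
every element is `f`-bounded and `T` is closed under initial segments. -/
def IsSubtree (f : ℕ → ℕ) (T : Set (List ℕ)) : Prop :=
  (∀ t ∈ T, ∀ i, i < t.length → t.getD i 0 < f i) ∧
  (∀ t ∈ T, ∀ n, t.take n ∈ T)

/-- The `n`-th level of a tree: its elements of length `n`. -/
def treeLevel (T : Set (List ℕ)) (n : ℕ) : Set (List ℕ) := {t ∈ T | t.length = n}
lemma decomp {f : ℕ → ℕ} {T : Set (List ℕ)} (hT : IsSubtree f T) {n : ℕ} {t : List ℕ}
    (ht : t ∈ treeLevel T (n+1)) :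
    t.dropLast ∈ treeLevel T n ∧ t.getD n 0 < f n ∧ t.dropLast ++ [t.getD n 0] = t := by
  obtain ⟨htT, hlen⟩ := ht
  have hne : t ≠ [] := by intro h; simp [h] at hlen
  have hd : t.dropLast = t.take n := by
    rw [List.dropLast_eq_take, hlen]; norm_num
  refine ⟨⟨hd ▸ hT.2 t htT n, by simp [List.length_dropLast, hlen]⟩, hT.1 t htT n (by omega), ?_⟩
  have h1 : t.getD n 0 = t.getLast hne := by
    rw [List.getLast_eq_getElem, List.getD_eq_getElem t 0 (by omega)]
    congr 1; omega
  rw [h1, List.dropLast_append_getLast]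

lemma level_card {f : ℕ → ℕ} {T : Set (List ℕ)} (hT : IsSubtree f T) (n : ℕ)
    (hfin : (treeLevel T n).Finite) (s : Finset ℕ)
    (hs : ∀ t ∈ treeLevel T (n+1), t.getD n 0 ∈ s) :
    (treeLevel T (n+1)).Finite ∧
      (treeLevel T (n+1)).ncard ≤ (treeLevel T n).ncard * s.card := by
  have hsub : treeLevel T (n+1) ⊆
      ↑(Finset.image (fun p : List ℕ × ℕ => p.1 ++ [p.2]) (hfin.toFinset ×ˢ s)) := by
    intro t ht
    obtain ⟨h1, _, h3⟩ := decomp hT ht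
    simp only [Finset.coe_image, Set.mem_image, Finset.mem_coe, Finset.mem_product]
    exact ⟨(t.dropLast, t.getD n 0), ⟨by simp [Set.Finite.mem_toFinset, h1], hs t ht⟩, h3⟩
  refine ⟨(Finset.finite_toSet _).subset hsub, ?_⟩
  calc (treeLevel T (n+1)).ncard ≤ _ := Set.ncard_le_ncard hsub (Finset.finite_toSet _)
    _ = (Finset.image (fun p : List ℕ × ℕ => p.1 ++ [p.2]) (hfin.toFinset ×ˢ s)).card :=
        Set.ncard_coe_finset _
    _ ≤ (hfin.toFinset ×ˢ s).card := Finset.card_image_le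
    _ = (treeLevel T n).ncard * s.card := by
        rw [Finset.card_product, Set.ncard_eq_toFinset_card _ hfin]

theorem stmt0 (f : ℕ → ℕ) (hf : ∀ n, 2 ≤ f n)
    (c : List ℕ → Fin 2)
    (hc : ∀ s : List ℕ, s ≠ [] →
      (c s = 0 ↔ s.getD (s.length - 1) 0 < f (s.length - 1) / 2))
    (T : Set (List ℕ)) (hT : IsSubtree f T)
    (F : Finset ℕ) (hFne : F.Nonempty) (hFpos : ∀ n ∈ F, 0 < n)
    (hhom : ∀ n ∈ F, ∃ ε : Fin 2, ∀ t ∈ treeLevel T n, c t = ε) :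
    ((treeLevel T (F.max' hFne + 1)).ncard : ℝ) /
        ∏ i ∈ Finset.range (F.max' hFne + 1), (f i : ℝ)
      ≤ (2 / 3 : ℝ) ^ F.card := by
  set M := F.max' hFne with hM
  set g : ℕ → ℕ := fun i => if i+1 ∈ F then (f i + 1)/2 else f i with hg
  -- main counting induction
  have key : ∀ n, (treeLevel T n).Finite ∧
      (treeLevel T n).ncard ≤ ∏ i ∈ Finset.range n, g i := by
    intro n
    induction n with
    | zero =>
      have hsub : treeLevel T 0 ⊆ {([] : List ℕ)} := by
        rintro t ⟨-, hlen⟩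
        simp [List.length_eq_zero_iff.mp hlen]
      constructor
      · exact (Set.finite_singleton _).subset hsub
      · simpa using (Set.ncard_le_ncard hsub (Set.finite_singleton _)).trans (by simp)
    | succ n ih =>
      obtain ⟨hfin, hcard⟩ := ih
      obtain ⟨s, hs, hscard⟩ : ∃ s : Finset ℕ,
          (∀ t ∈ treeLevel T (n+1), t.getD n 0 ∈ s) ∧ s.card ≤ g n := by
        by_cases hF : n+1 ∈ F
        · obtain ⟨ε, hε⟩ := hhom (n+1) hF
          have hne : ∀ t ∈ treeLevel T (n+1), t ≠ [] := by
            rintro t ⟨-, hlen⟩ h; simp [h] at hlen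
          have hlast : ∀ t ∈ treeLevel T (n+1),
              (c t = 0 ↔ t.getD n 0 < f n / 2) := by
            intro t ht
            have := hc t (hne t ht)
            rwa [ht.2] at this
          fin_cases ε
          · refine ⟨Finset.range (f n / 2), fun t ht => ?_, ?_⟩
            · rw [Finset.mem_range]
              exact (hlast t ht).mp (hε t ht)
            · simp only [hg, if_pos hF, Finset.card_range]; omega
          · refine ⟨Finset.Ico (f n / 2) (f n), fun t ht => ?_, ?_⟩
            · rw [Finset.mem_Ico]
              have h1 : ¬ (t.getD n 0 < f n / 2) := by
                intro h
                have := (hlast t ht).mpr h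
                rw [hε t ht] at this
                exact absurd this (by decide)
              exact ⟨by omega, (decomp hT ht).2.1⟩
            · simp only [hg, if_pos hF, Nat.card_Ico]; omega
        · exact ⟨Finset.range (f n), fun t ht => Finset.mem_range.mpr (decomp hT ht).2.1,
            by simp [hg, hF]⟩
      obtain ⟨hfin', hcard'⟩ := level_card hT n hfin s hs
      refine ⟨hfin', ?_⟩
      calc (treeLevel T (n+1)).ncard ≤ (treeLevel T n).ncard * s.card := hcard'
        _ ≤ (∏ i ∈ Finset.range n, g i) * g n := Nat.mul_le_mul hcard hscard
        _ = ∏ i ∈ Finset.range (n+1), g i := (Finset.prod_range_succ g n).symm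
  obtain ⟨-, hcard⟩ := key (M+1)
  have hfpos : ∀ i, (0:ℝ) < f i := fun i => by
    have := hf i; positivity
  have hprodpos : 0 < ∏ i ∈ Finset.range (M+1), (f i : ℝ) :=
    Finset.prod_pos fun i _ => hfpos i
  rw [div_le_iff₀ hprodpos]
  have hcount : ((Finset.range (M+1)).filter (fun i => i+1 ∈ F)).card = F.card := by
    apply Finset.card_bij (fun a _ => a + 1)
    · intro a ha; exact (Finset.mem_filter.mp ha).2
    · intro a _ b _ h; omega
    · intro b hb
      have hb1 := hFpos b hb
      have hb2 := Finset.le_max' F b hb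
      refine ⟨b - 1, Finset.mem_filter.mpr ⟨Finset.mem_range.mpr (by omega), ?_⟩, by omega⟩
      have : b - 1 + 1 = b := by omega
      rw [this]; exact hb
  calc ((treeLevel T (M+1)).ncard : ℝ) ≤ ∏ i ∈ Finset.range (M+1), (g i : ℝ) := by
        rw [← Nat.cast_prod]; exact_mod_cast hcard
    _ ≤ ∏ i ∈ Finset.range (M+1), (if i+1 ∈ F then (2/3 : ℝ) else 1) * f i := by
        apply Finset.prod_le_prod (fun i _ => by positivity)
        intro i _
        by_cases hF : i+1 ∈ F
        · simp only [hg, if_pos hF]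
          have h3 : (3:ℕ) * ((f i + 1)/2) ≤ 2 * f i := by have := hf i; omega
          have h3' : (3:ℝ) * ((f i + 1)/2 : ℕ) ≤ 2 * f i := by exact_mod_cast h3
          linarith
        · simp [hg, hF]
    _ = (∏ i ∈ Finset.range (M+1), (if i+1 ∈ F then (2/3 : ℝ) else 1)) *
          ∏ i ∈ Finset.range (M+1), (f i : ℝ) := Finset.prod_mul_distrib
    _ = (2/3 : ℝ) ^ F.card * ∏ i ∈ Finset.range (M+1), (f i : ℝ) := by
        rw [Finset.prod_ite, Finset.prod_const, Finset.prod_const_one, mul_one, hcount]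
end

section
/- Let f : ℕ → ℕ with f(n) ≥ 2 for all n. There exists a colouring c : seq(f) → {0,1} such that for every subtree T of seq(f), either T(n) is homogeneous for c for only finitely many n, or μ_f([T]) = 0, where μ_f is the Haar (product uniform) probability measure on ∏_n {0,…,f(n)−1} and [T] is the set of branches of T. -/
/-- The colouring: parity of the last entry. -/
def col (t : List ℕ) : Fin 2 := ⟨t.getLastD 0 % 2, by omega⟩

open Finset MeasureTheory

open Classical in
/-- The set of level-`n` elements of `T`, as functions. -/
noncomputable def lvl (f : ℕ → ℕ) (T : Set (List ℕ)) (n : ℕ) :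
    Finset ((i : Fin n) → Fin (f i)) :=
  Finset.univ.filter (fun s => List.ofFn (fun i => ((s i : ℕ))) ∈ T)

lemma card_filter_parity (m e : ℕ) :
    (Finset.univ.filter (fun a : Fin m => (a : ℕ) % 2 = e)).card ≤ (m + 1) / 2 := by
  classical
  have h := Finset.card_le_card_of_injOn
    (s := Finset.univ.filter (fun a : Fin m => (a : ℕ) % 2 = e))
    (t := Finset.range ((m + 1) / 2)) (fun a : Fin m => (a : ℕ) / 2) ?_ ?_
  · simpa using h
  · intro a ha
    simp only [Finset.mem_coe, Finset.mem_filter, Finset.mem_univ, true_and] at ha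
    have := a.isLt
    simp only [Finset.mem_coe, Finset.mem_range]
    omega
  · intro a ha b hb h'
    simp only [Finset.coe_filter, Set.mem_setOf_eq] at ha hb
    have h2 : (a : ℕ) / 2 = (b : ℕ) / 2 := h'
    exact Fin.ext (by omega)

/-- restricting a level-(n+1) element gives a level-n element -/
lemma lvl_restrict {f : ℕ → ℕ} {T : Set (List ℕ)} (hT : IsSubtree f T) {n : ℕ}
    {s : (i : Fin (n + 1)) → Fin (f i)} (hs : s ∈ lvl f T (n + 1)) :
    (fun i : Fin n => s i.castSucc) ∈ lvl f T n := by
  classical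
  simp only [lvl, Finset.mem_filter, Finset.mem_univ, true_and] at hs ⊢
  have h1 : List.ofFn (fun i : Fin n => ((s i.castSucc : ℕ))) =
      (List.ofFn (fun i : Fin (n + 1) => ((s i : ℕ)))).take n := by
    rw [List.ofFn_succ']
    rw [List.concat_eq_append, List.take_append_of_le_length (by simp)]
    simp
  rw [h1]
  exact hT.2 _ hs n

lemma lvl_card_step {f : ℕ → ℕ} {T : Set (List ℕ)} (hT : IsSubtree f T) (n : ℕ)
    (E : Finset (Fin (f n)))
    (hE : ∀ s ∈ lvl f T (n + 1), s (Fin.last n) ∈ E) :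
    (lvl f T (n + 1)).card ≤ (lvl f T n).card * E.card := by
  classical
  have h := Finset.card_le_card_of_injOn
    (s := lvl f T (n + 1)) (t := (lvl f T n) ×ˢ E)
    (fun s => (fun i : Fin n => s i.castSucc, s (Fin.last n))) ?_ ?_
  · simpa [Finset.card_product] using h
  · intro s hs
    simp only [Finset.mem_coe, Finset.mem_product]
    exact ⟨lvl_restrict hT hs, hE s hs⟩
  · intro s _ t _ h'
    have h1 : (fun i : Fin n => s i.castSucc) = (fun i : Fin n => t i.castSucc) :=
      congrArg Prod.fst h'
    have h2 : s (Fin.last n) = t (Fin.last n) := congrArg Prod.snd h'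
    funext i
    refine Fin.lastCases h2 (fun j => ?_) i
    exact congrFun h1 j

lemma lvl_card_hom {f : ℕ → ℕ} {T : Set (List ℕ)} (hT : IsSubtree f T) (n : ℕ) (ε : Fin 2)
    (hhom : ∀ t ∈ treeLevel T (n + 1), col t = ε) :
    (lvl f T (n + 1)).card ≤ (lvl f T n).card * ((f n + 1) / 2) := by
  classical
  set E := Finset.univ.filter (fun a : Fin (f n) => (a : ℕ) % 2 = (ε : ℕ)) with hEdef
  have h1 : ∀ s ∈ lvl f T (n + 1), s (Fin.last n) ∈ E := by
    intro s hs
    simp only [lvl, Finset.mem_filter, Finset.mem_univ, true_and] at hs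
    have hlev : List.ofFn (fun i : Fin (n + 1) => ((s i : ℕ))) ∈ treeLevel T (n + 1) :=
      ⟨hs, by simp⟩
    have h2 := hhom _ hlev
    have hc : col (List.ofFn (fun i : Fin (n + 1) => ((s i : ℕ)))) =
        ⟨(s (Fin.last n) : ℕ) % 2, by omega⟩ := by
      unfold col
      congr 1
      rw [List.ofFn_succ']
      simp [List.getLastD_concat]
    rw [hc] at h2
    simp only [hEdef, Finset.mem_filter, Finset.mem_univ, true_and]
    have := congrArg Fin.val h2
    simpa using this
  calc (lvl f T (n + 1)).card ≤ (lvl f T n).card * E.card := lvl_card_step hT n E h1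
    _ ≤ (lvl f T n).card * ((f n + 1) / 2) :=
        Nat.mul_le_mul_left _ (card_filter_parity (f n) (ε : ℕ))

lemma lvl_card_gen {f : ℕ → ℕ} {T : Set (List ℕ)} (hT : IsSubtree f T) (n : ℕ) :
    (lvl f T (n + 1)).card ≤ (lvl f T n).card * f n := by
  classical
  have := lvl_card_step hT n Finset.univ (fun s _ => Finset.mem_univ _)
  simpa using this

open MeasureTheory in
lemma meas_le {f : ℕ → ℕ} (μ : Measure ((n : ℕ) → Fin (f n)))
    (hμ : ∀ (n : ℕ) (s : (i : Fin n) → Fin (f i)),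
      μ {x | ∀ i : Fin n, x i = s i} = (∏ i ∈ Finset.range n, (f i : ENNReal))⁻¹)
    (T : Set (List ℕ)) (n : ℕ) :
    μ {x | List.ofFn (fun i : Fin n => ((x i : ℕ))) ∈ T}
      ≤ ((lvl f T n).card : ENNReal) * (∏ i ∈ Finset.range n, (f i : ENNReal))⁻¹ := by
  classical
  have hsub : {x : (n : ℕ) → Fin (f n) | List.ofFn (fun i : Fin n => ((x i : ℕ))) ∈ T}
      ⊆ ⋃ s ∈ lvl f T n, {x | ∀ i : Fin n, x i = s i} := by
    intro x hx
    refine Set.mem_iUnion₂.mpr ⟨fun i : Fin n => x i, ?_, fun i => rfl⟩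
    simp only [lvl, Finset.mem_filter, Finset.mem_univ, true_and]
    exact hx
  calc μ _ ≤ μ (⋃ s ∈ lvl f T n, {x | ∀ i : Fin n, x i = s i}) := measure_mono hsub
    _ ≤ ∑ s ∈ lvl f T n, μ {x | ∀ i : Fin n, x i = s i} := measure_biUnion_finset_le _ _
    _ = ∑ _s ∈ lvl f T n, (∏ i ∈ Finset.range n, (f i : ENNReal))⁻¹ :=
        Finset.sum_congr rfl (fun s _ => hμ n s)
    _ = _ := by rw [Finset.sum_const, nsmul_eq_mul]

lemma ratio_le {a b : ℕ} (h : 3 * a ≤ 2 * b) :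
    (a : ENNReal) * (b : ENNReal)⁻¹ ≤ 2 / 3 := by
  rcases Nat.eq_zero_or_pos b with hb | hb
  · subst hb
    have : a = 0 := by omega
    subst this
    simp
  · have h2 : ((3 * a : ℕ) : ENNReal) ≤ ((2 * b : ℕ) : ENNReal) := Nat.cast_le.mpr h
    push_cast at h2
    have h3 : (a : ENNReal) * 3 ≤ 2 * b := by rw [mul_comm]; exact h2
    have h4 : (a : ENNReal) ≤ 2 * (b : ENNReal) / 3 :=
      (ENNReal.le_div_iff_mul_le (b := 3) (c := 2 * (b : ENNReal)) (Or.inl (by norm_num))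
        (Or.inl (ENNReal.ofNat_ne_top))).mpr h3
    have h5 : (2 : ENNReal) * b / 3 = 2 / 3 * b := by
      rw [div_eq_mul_inv, div_eq_mul_inv, mul_right_comm]
    rw [← div_eq_mul_inv]
    exact (ENNReal.div_le_iff_le_mul (Or.inl (Nat.cast_ne_zero.mpr (by omega)))
      (Or.inl (ENNReal.natCast_ne_top b))).mpr (by rw [← h5]; exact h4)


/-- There is a colouring `c` of `seq f` such that every subtree `T` either has only
finitely many levels homogeneous for `c`, or its set of branches `[T]` is
`μ_f`-null, where `μ_f` is the Haar (product uniform) probability measure,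
characterized by its values on cylinders. -/
theorem stmt1 (f : ℕ → ℕ) (hf : ∀ n, 2 ≤ f n)
    (μ : MeasureTheory.Measure ((n : ℕ) → Fin (f n)))
    (hprob : MeasureTheory.IsProbabilityMeasure μ)
    (hμ : ∀ (n : ℕ) (s : (i : Fin n) → Fin (f i)),
      μ {x | ∀ i : Fin n, x i = s i} = (∏ i ∈ Finset.range n, (f i : ENNReal))⁻¹) :
    ∃ c : List ℕ → Fin 2,
      ∀ T : Set (List ℕ), IsSubtree f T →
        {n : ℕ | ∃ ε : Fin 2, ∀ t ∈ treeLevel T n, c t = ε}.Finite ∨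
        μ {x | ∀ n : ℕ, List.ofFn (fun i : Fin n => ((x i : ℕ))) ∈ T} = 0 := by
  classical
  refine ⟨col, fun T hT => ?_⟩
  rw [or_iff_not_imp_left]
  intro hinf
  set H := {n : ℕ | ∃ ε : Fin 2, ∀ t ∈ treeLevel T n, col t = ε} with hHdef
  set Pr : ℕ → ENNReal := fun n => ∏ i ∈ Finset.range n, (f i : ENNReal) with hPr
  have hfn0 : ∀ n, (f n : ENNReal) ≠ 0 :=
    fun n => Nat.cast_ne_zero.mpr (by have := hf n; omega)
  set P : ℕ → ENNReal := fun n => ((lvl f T n).card : ENNReal) * (Pr n)⁻¹ with hP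
  have hPrsucc : ∀ n, (Pr (n + 1))⁻¹ = (Pr n)⁻¹ * (f n : ENNReal)⁻¹ := by
    intro n
    rw [hPr]
    simp only [Finset.prod_range_succ]
    rw [ENNReal.mul_inv (Or.inr (ENNReal.natCast_ne_top _))
      (Or.inr (hfn0 n))]
  have hstep : ∀ n, P (n + 1) ≤ P n := by
    intro n
    calc P (n + 1) = ((lvl f T (n + 1)).card : ENNReal) * (Pr (n + 1))⁻¹ := rfl
      _ ≤ (((lvl f T n).card * f n : ℕ) : ENNReal) * ((Pr n)⁻¹ * (f n : ENNReal)⁻¹) := by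
          rw [hPrsucc n]
          exact mul_le_mul_left (Nat.cast_le.mpr (lvl_card_gen hT n)) _
      _ = (((lvl f T n).card : ENNReal) * (Pr n)⁻¹) * ((f n : ENNReal) * (f n : ENNReal)⁻¹) := by
          push_cast; ring
      _ = P n := by
          rw [ENNReal.mul_inv_cancel (hfn0 n) (ENNReal.natCast_ne_top _), mul_one]
  have hstephom : ∀ n, (n + 1) ∈ H → P (n + 1) ≤ 2 / 3 * P n := by
    intro n hn
    obtain ⟨ε, hε⟩ := hn
    calc P (n + 1)
        ≤ (((lvl f T n).card * ((f n + 1) / 2) : ℕ) : ENNReal) * ((Pr n)⁻¹ * (f n : ENNReal)⁻¹) := by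
          rw [hP]; simp only; rw [hPrsucc n]
          exact mul_le_mul_left (Nat.cast_le.mpr (lvl_card_hom hT n ε hε)) _
      _ = (((lvl f T n).card : ENNReal) * (Pr n)⁻¹) *
            ((((f n + 1) / 2 : ℕ) : ENNReal) * (f n : ENNReal)⁻¹) := by
          push_cast; ring
      _ ≤ P n * (2 / 3) := mul_le_mul_right (ratio_le (by have := hf n; omega)) _
      _ = 2 / 3 * P n := mul_comm _ _
  have hP0 : P 0 ≤ 1 := by
    have h1 : (lvl f T 0).card ≤ 1 :=
      Finset.card_le_one.mpr (fun a _ b _ => funext (fun i => i.elim0))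
    rw [hP]
    simp only [hPr, Finset.range_zero, Finset.prod_empty, inv_one, mul_one]
    exact_mod_cast h1
  have key : ∀ n, P n ≤ (2 / 3 : ENNReal) ^
      ((Finset.range n).filter (fun m => m + 1 ∈ H)).card := by
    intro n
    induction n with
    | zero => simpa using hP0
    | succ n ih =>
      rw [Finset.range_add_one, Finset.filter_insert]
      by_cases hm : n + 1 ∈ H
      · rw [if_pos hm, Finset.card_insert_of_notMem (by simp), pow_succ]
        calc P (n + 1) ≤ 2 / 3 * P n := hstephom n hm
          _ ≤ 2 / 3 * (2 / 3) ^ ((Finset.range n).filter (fun m => m + 1 ∈ H)).card :=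
              mul_le_mul_right ih _
          _ = _ := mul_comm _ _
      · rw [if_neg hm]
        exact (hstep n).trans ih
  have hH2 : {m : ℕ | m + 1 ∈ H}.Infinite := by
    intro hfin2
    apply hinf
    have hsub2 : H ⊆ insert 0 ((· + 1) '' {m | m + 1 ∈ H}) := by
      intro n hn
      cases n with
      | zero => exact Set.mem_insert _ _
      | succ m => exact Set.mem_insert_of_mem _ ⟨m, hn, rfl⟩
    exact ((hfin2.image _).insert 0).subset hsub2
  have h23 : (2 / 3 : ENNReal) < 1 := by
    rw [ENNReal.div_lt_iff (Or.inl (by norm_num)) (Or.inl (ENNReal.ofNat_ne_top))]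
    norm_num
  have hfinal : ∀ j : ℕ,
      μ {x | ∀ n : ℕ, List.ofFn (fun i : Fin n => ((x i : ℕ))) ∈ T} ≤ (2 / 3 : ENNReal) ^ j := by
    intro j
    obtain ⟨F, hFsub, hFcard⟩ := hH2.exists_subset_card_eq j
    set n := F.sup id + 1 with hn
    have h6 : F ⊆ (Finset.range n).filter (fun m => m + 1 ∈ H) := by
      intro m hm
      rw [Finset.mem_filter, Finset.mem_range]
      exact ⟨Nat.lt_succ_of_le (Finset.le_sup (f := id) hm), hFsub hm⟩
    have h7 : j ≤ ((Finset.range n).filter (fun m => m + 1 ∈ H)).card := by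
      rw [← hFcard]; exact Finset.card_le_card h6
    calc μ {x | ∀ n : ℕ, List.ofFn (fun i : Fin n => ((x i : ℕ))) ∈ T}
        ≤ μ {x | List.ofFn (fun i : Fin n => ((x i : ℕ))) ∈ T} :=
          measure_mono (fun x hx => hx n)
      _ ≤ P n := meas_le μ hμ T n
      _ ≤ (2 / 3 : ENNReal) ^ ((Finset.range n).filter (fun m => m + 1 ∈ H)).card := key n
      _ ≤ (2 / 3 : ENNReal) ^ j := pow_le_pow_right_of_le_one' h23.le h7
  refine le_antisymm ?_ zero_le
  exact ge_of_tendsto' (ENNReal.tendsto_pow_atTop_nhds_zero_of_lt_one h23) hfinal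
end

section
/- Let 𝓗 be a family of functions τ : [0,∞) → [0,∞) such that every τ ∈ 𝓗 is concave, nondecreasing, satisfies lim_{x→∞} τ(x) = ∞ and τ(x) = O(x), and such that for every τ ∈ 𝓗 there is σ ∈ 𝓗 with σ ∘ σ = τ. Define g ≤_τ h iff liminf_{n→∞} h(n)/τ(g(n)) > 0, and g ≤_𝓗 h iff g ≤_τ h for all τ ∈ 𝓗. Then ≤_𝓗 is a quasi-ordering (reflexive and transitive) on the set of functions g : ℕ → ℕ with lim_{n→∞} g(n) = ∞. -/
/-- `g ≤_τ h` iff `liminf_n h(n)/τ(g(n)) > 0` (computed in `ℝ≥0∞`). -/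
def LeTau (τ : ℝ → ℝ) (g h : ℕ → ℕ) : Prop :=
  0 < Filter.liminf (fun n => (h n : ENNReal) / ENNReal.ofReal (τ (g n))) Filter.atTop

/-- `g ≤_𝓗 h` iff `g ≤_τ h` for all `τ ∈ 𝓗`. -/
def LeFam (H : Set (ℝ → ℝ)) (g h : ℕ → ℕ) : Prop := ∀ τ ∈ H, LeTau τ g h

open Filter ENNReal in
lemma extract_const {σ : ℝ → ℝ} {g h : ℕ → ℕ}
    (hh : Filter.Tendsto h Filter.atTop Filter.atTop) (Hle : LeTau σ g h) :
    ∃ c : ℝ, 0 < c ∧ c ≤ 1 ∧ ∀ᶠ n in Filter.atTop, c * σ (g n) ≤ h n := by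
  set L := Filter.liminf (fun n => (h n : ENNReal) / ENNReal.ofReal (σ (g n))) Filter.atTop with hL
  have hLpos : 0 < L := Hle
  set ε : ℝ≥0∞ := min 1 L / 2 with hε
  have hεpos : 0 < ε := by
    apply ENNReal.div_pos
    · simp [lt_min_iff, hLpos, ← pos_iff_ne_zero]
    · exact ofNat_ne_top
  have hεtop : ε ≠ ⊤ := by
    refine ne_top_of_le_ne_top (by norm_num : (1:ℝ≥0∞)/2 ≠ ⊤) ?_
    exact ENNReal.div_le_div_right (min_le_left _ _) 2
  have hεle1 : ε ≤ 1 := by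
    calc ε ≤ 1 / 2 := ENNReal.div_le_div_right (min_le_left _ _) 2
    _ ≤ 1 := by norm_num
  have hεL : ε < L := by
    rcases eq_or_ne L ⊤ with h | h
    · rw [h]; exact lt_of_le_of_lt hεle1 (by norm_num)
    · have h1 : (0:ℝ≥0∞) < min 1 L := lt_min one_pos hLpos
      have h2 : min 1 L ≠ ⊤ := ne_top_of_le_ne_top one_ne_top (min_le_left _ _)
      exact lt_of_lt_of_le (ENNReal.half_lt_self h1.ne' h2) (min_le_right _ _)
  have hev : ∀ᶠ n in Filter.atTop, ε < (h n : ℝ≥0∞) / ENNReal.ofReal (σ (g n)) :=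
    Filter.eventually_lt_of_lt_liminf hεL
  refine ⟨ε.toReal, ENNReal.toReal_pos hεpos.ne' hεtop, ?_, ?_⟩
  · exact (ENNReal.toReal_le_toReal hεtop one_ne_top).mpr hεle1 |>.trans_eq (by simp)
  · filter_upwards [hev, hh.eventually_ge_atTop 1] with n hn hn1
    rcases le_or_gt (σ (g n)) 0 with hσ | hσ
    · have : ε.toReal * σ (g n) ≤ 0 := mul_nonpos_of_nonneg_of_nonpos
        (ENNReal.toReal_nonneg) hσ
      calc ε.toReal * σ (g n) ≤ 0 := this
        _ ≤ (h n : ℝ) := Nat.cast_nonneg _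
    · have hne : (h n : ℝ≥0∞) ≠ 0 := Nat.cast_ne_zero.mpr (by omega)
      have hmul : ε * ENNReal.ofReal (σ (g n)) ≤ (h n : ℝ≥0∞) := by
        rw [← ENNReal.le_div_iff_mul_le (Or.inr hne) (Or.inl ofReal_ne_top)]
        exact hn.le
      have : ENNReal.ofReal (ε.toReal * σ (g n)) ≤ ENNReal.ofReal ((h n : ℝ)) := by
        rw [ENNReal.ofReal_mul ENNReal.toReal_nonneg, ENNReal.ofReal_toReal hεtop,
          ENNReal.ofReal_natCast]
        exact hmul
      exact (ENNReal.ofReal_le_ofReal_iff (Nat.cast_nonneg _)).mp this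

open Filter ENNReal in
lemma concave_smul_le {σ : ℝ → ℝ} (hc : ConcaveOn ℝ (Set.Ici 0) σ) (h0 : 0 ≤ σ 0)
    {c x : ℝ} (hc0 : 0 ≤ c) (hc1 : c ≤ 1) (hx : 0 ≤ x) : c * σ x ≤ σ (c * x) := by
  have := hc.2 (Set.mem_Ici.mpr hx) (Set.mem_Ici.mpr le_rfl) hc0 (by linarith : (0:ℝ) ≤ 1 - c)
    (by ring)
  simp only [smul_eq_mul, mul_zero, add_zero] at this
  nlinarith

open Filter ENNReal

/-- If `𝓗` is a suitable family (each member concave, nondecreasing, tending to `∞`,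
`O(x)`, and `𝓗` closed under taking square roots under composition), then `≤_𝓗`
is reflexive and transitive on the functions `ℕ → ℕ` tending to infinity. -/
theorem stmt3 (H : Set (ℝ → ℝ))
    (hconc : ∀ τ ∈ H, ConcaveOn ℝ (Set.Ici 0) τ)
    (hmono : ∀ τ ∈ H, MonotoneOn τ (Set.Ici 0))
    (hnonneg : ∀ τ ∈ H, ∀ x : ℝ, 0 ≤ x → 0 ≤ τ x)
    (htop : ∀ τ ∈ H, Filter.Tendsto τ Filter.atTop Filter.atTop)
    (hO : ∀ τ ∈ H, ∃ C > (0 : ℝ), ∀ᶠ x in Filter.atTop, τ x ≤ C * x)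
    (hroot : ∀ τ ∈ H, ∃ σ ∈ H, ∀ x : ℝ, 0 ≤ x → σ (σ x) = τ x) :
    (∀ g : ℕ → ℕ, Filter.Tendsto g Filter.atTop Filter.atTop → LeFam H g g) ∧
    (∀ g h k : ℕ → ℕ,
      Filter.Tendsto g Filter.atTop Filter.atTop →
      Filter.Tendsto h Filter.atTop Filter.atTop →
      Filter.Tendsto k Filter.atTop Filter.atTop →
      LeFam H g h → LeFam H h k → LeFam H g k) := by
  constructor
  · -- reflexivity
    intro g hg τ hτ
    obtain ⟨C, hC, hCev⟩ := hO τ hτ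
    have hgR : Filter.Tendsto (fun n => ((g n : ℝ))) Filter.atTop Filter.atTop :=
      tendsto_natCast_atTop_atTop.comp hg
    have hev : ∀ᶠ n in Filter.atTop,
        (ENNReal.ofReal C)⁻¹ ≤ (g n : ℝ≥0∞) / ENNReal.ofReal (τ (g n)) := by
      filter_upwards [hgR.eventually hCev, hg.eventually_ge_atTop 1] with n hn hn1
      have hgne : (g n : ℝ≥0∞) ≠ 0 := Nat.cast_ne_zero.mpr (by omega)
      rw [ENNReal.le_div_iff_mul_le (Or.inr hgne) (Or.inl ofReal_ne_top)]
      have h1 : ENNReal.ofReal (τ (g n)) ≤ ENNReal.ofReal C * (g n : ℝ≥0∞) := by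
        rw [← ENNReal.ofReal_natCast, ← ENNReal.ofReal_mul hC.le]
        exact ENNReal.ofReal_le_ofReal hn
      calc (ENNReal.ofReal C)⁻¹ * ENNReal.ofReal (τ (g n))
          ≤ (ENNReal.ofReal C)⁻¹ * (ENNReal.ofReal C * (g n : ℝ≥0∞)) :=
            mul_le_mul_right h1 _
        _ = (g n : ℝ≥0∞) := by
            rw [← mul_assoc, ENNReal.inv_mul_cancel (by simp [hC]) ofReal_ne_top, one_mul]
    have : (ENNReal.ofReal C)⁻¹ ≤ Filter.liminf
        (fun n => (g n : ℝ≥0∞) / ENNReal.ofReal (τ (g n))) Filter.atTop :=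
      Filter.le_liminf_of_le (by isBoundedDefault) hev
    exact lt_of_lt_of_le (ENNReal.inv_pos.mpr ofReal_ne_top) this
  · -- transitivity
    intro g h k hg hh hk hgh hhk τ hτ
    obtain ⟨σ, hσH, hστ⟩ := hroot τ hτ
    obtain ⟨c₁, hc₁, hc₁1, hev₁⟩ := extract_const hh (hgh σ hσH)
    obtain ⟨c₂, hc₂, hc₂1, hev₂⟩ := extract_const hk (hhk σ hσH)
    have key : ∀ᶠ n in Filter.atTop,
        ENNReal.ofReal (c₂ * c₁) ≤ (k n : ℝ≥0∞) / ENNReal.ofReal (τ (g n)) := by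
      filter_upwards [hev₁, hev₂, hk.eventually_ge_atTop 1] with n h1 h2 hk1
      have hgσ : (0:ℝ) ≤ σ (g n) := hnonneg σ hσH _ (Nat.cast_nonneg _)
      have hcσ : (0:ℝ) ≤ c₁ * σ (g n) := mul_nonneg hc₁.le hgσ
      have hmono' : σ (c₁ * σ (g n)) ≤ σ (h n) :=
        hmono σ hσH (Set.mem_Ici.mpr hcσ) (Set.mem_Ici.mpr (Nat.cast_nonneg _)) h1
      have hconc' : c₁ * σ (σ (g n)) ≤ σ (c₁ * σ (g n)) :=
        concave_smul_le (hconc σ hσH) (hnonneg σ hσH 0 le_rfl) hc₁.le hc₁1 hgσ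
      have hτg : c₁ * τ (g n) ≤ σ (h n) := by
        rw [← hστ _ (Nat.cast_nonneg _)]; linarith
      have hchain : c₂ * c₁ * τ (g n) ≤ (k n : ℝ) := by
        have : c₂ * (c₁ * τ (g n)) ≤ c₂ * σ (h n) := by
          exact mul_le_mul_of_nonneg_left hτg hc₂.le
        linarith
      have hkne : (k n : ℝ≥0∞) ≠ 0 := Nat.cast_ne_zero.mpr (by omega)
      rw [ENNReal.le_div_iff_mul_le (Or.inr hkne) (Or.inl ofReal_ne_top)]
      rw [← ENNReal.ofReal_mul (by positivity)]
      calc ENNReal.ofReal (c₂ * c₁ * τ (g n)) ≤ ENNReal.ofReal ((k n : ℝ)) :=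
            ENNReal.ofReal_le_ofReal hchain
        _ = (k n : ℝ≥0∞) := ENNReal.ofReal_natCast _
    have : ENNReal.ofReal (c₂ * c₁) ≤ Filter.liminf
        (fun n => (k n : ℝ≥0∞) / ENNReal.ofReal (τ (g n))) Filter.atTop :=
      Filter.le_liminf_of_le (by isBoundedDefault) key
    exact lt_of_lt_of_le (ENNReal.ofReal_pos.mpr (by positivity)) this
end

section
/- Let 𝒰 be a nonprincipal selective ultrafilter on ℕ, F : ℕ → Set with each F(n) a nonempty finite set, and g : ℕ → ℕ with g(n) ≥ 1 for all n. Define 𝓗 = { A ⊆ ℕ(F) : lim_{n→𝒰} |A(n)|/g(n) = ∞ }, where ℕ(F) = {(n,x) : x ∈ F(n)} and A(n) = {x : (n,x) ∈ A}. If lim_{n→∞} g(n)/|F(n)| = 0, then 𝓗 is a nonempty selective coideal on ℕ(F): ℕ(F) ∈ 𝓗; 𝓗 is upward closed; if A ∪ B ∈ 𝓗 then A ∈ 𝓗 or B ∈ 𝓗; and every decreasing sequence A₀ ⊇ A₁ ⊇ ⋯ of members of 𝓗 has a diagonalization B ∈ 𝓗, meaning B − k ⊆ A_k for every k ∈ dom(B).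 -/
/-- Let `𝒰` be a nonprincipal selective ultrafilter on `ℕ`, `F n` nonempty finite
sets, `g ≥ 1` with `g(n)/|F(n)| → 0`. Then
`𝓗 = {A ⊆ ℕ(F) : lim_{n→𝒰} |A(n)|/g(n) = ∞}` is a nonempty selective coideal on
`ℕ(F) = {(n,x) : x ∈ F(n)}`. -/
theorem stmt7 (U : Ultrafilter ℕ)
    (hnonpr : ∀ a : ℕ, U ≠ pure a)
    (hsel : ∀ A : ℕ → Set ℕ, (∀ k, A (k + 1) ⊆ A k) → (∀ k, A k ∈ U) →
      ∃ B ∈ U, ∀ k ∈ B, {n ∈ B | k < n} ⊆ A k)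
    (F : ℕ → Finset ℕ) (hF : ∀ n, (F n).Nonempty)
    (g : ℕ → ℕ) (hg : ∀ n, 1 ≤ g n)
    (hlim : Filter.Tendsto (fun n => (g n : ℝ) / ((F n).card : ℝ))
      Filter.atTop (nhds 0)) :
    -- ℕ(F)
    let NF : Set (ℕ × ℕ) := {p | p.2 ∈ F p.1}
    -- the coideal 𝓗 = 𝓗(𝒰, F, g)
    let H : Set (Set (ℕ × ℕ)) := {A | A ⊆ NF ∧
      Filter.Tendsto (fun n => (({x | (n, x) ∈ A}).ncard : ℝ) / (g n : ℝ))
        (U : Filter ℕ) Filter.atTop}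
    -- 𝓗 is nonempty: ℕ(F) ∈ 𝓗
    NF ∈ H ∧
    -- 𝓗 is upward closed (among subsets of ℕ(F))
    (∀ A B : Set (ℕ × ℕ), A ∈ H → A ⊆ B → B ⊆ NF → B ∈ H) ∧
    -- complement of an ideal: A ∪ B ∈ 𝓗 implies A ∈ 𝓗 or B ∈ 𝓗
    (∀ A B : Set (ℕ × ℕ), A ∪ B ∈ H → A ∈ H ∨ B ∈ H) ∧
    -- selectivity: every decreasing sequence in 𝓗 has a diagonalization in 𝓗
    (∀ A : ℕ → Set (ℕ × ℕ), (∀ k, A (k + 1) ⊆ A k) → (∀ k, A k ∈ H) →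
      ∃ B ∈ H, ∀ k : ℕ, (∃ x, (k, x) ∈ B) → {p ∈ B | k < p.1} ⊆ A k) := by
  intro NF H
  -- basic facts
  have hUcof : (U : Filter ℕ) ≤ Filter.cofinite := by
    rcases U.le_cofinite_or_eq_pure with h | ⟨a, ha⟩
    · exact h
    · exact absurd ha (hnonpr a)
  have hUatTop : (U : Filter ℕ) ≤ Filter.atTop := by
    rwa [← Nat.cofinite_eq_atTop]
  have hgpos : ∀ n, (0:ℝ) < (g n : ℝ) := fun n => by
    exact_mod_cast Nat.lt_of_lt_of_le Nat.zero_lt_one (hg n)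
  have hfin : ∀ (A : Set (ℕ × ℕ)), A ⊆ NF → ∀ n, {x | (n,x) ∈ A}.Finite := by
    intro A hA n
    exact (F n).finite_toSet.subset (fun x hx => hA hx)
  have hmonoDiv : ∀ (A B : Set (ℕ × ℕ)), B ⊆ NF → A ⊆ B → ∀ n,
      (({x | (n,x) ∈ A}).ncard : ℝ) / (g n : ℝ) ≤ (({x | (n,x) ∈ B}).ncard : ℝ) / (g n : ℝ) := by
    intro A B hBNF hAB n
    have h1 : ({x | (n,x) ∈ A}).ncard ≤ ({x | (n,x) ∈ B}).ncard :=
      Set.ncard_le_ncard (fun x hx => hAB hx) (hfin B hBNF n)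
    have h2 : (({x | (n,x) ∈ A}).ncard : ℝ) ≤ (({x | (n,x) ∈ B}).ncard : ℝ) := by
      exact_mod_cast h1
    gcongr
  have hNFmem : NF ∈ H := by
    constructor
    · exact subset_rfl
    · have hslice : ∀ n, ({x | (n,x) ∈ NF}) = ((F n : Set ℕ)) := fun n => rfl
      have h1 : Filter.Tendsto (fun n => ((F n).card : ℝ) / (g n : ℝ))
          Filter.atTop Filter.atTop := by
        have hpos : ∀ᶠ n in Filter.atTop, (0:ℝ) < (g n : ℝ) / ((F n).card : ℝ) := by
          filter_upwards with n
          have hc : (0:ℝ) < ((F n).card : ℝ) := by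
            exact_mod_cast (hF n).card_pos
          exact div_pos (hgpos n) hc
        have h2 : Filter.Tendsto (fun n => (g n : ℝ) / ((F n).card : ℝ))
            Filter.atTop (nhdsWithin 0 (Set.Ioi 0)) :=
          tendsto_nhdsWithin_of_tendsto_nhds_of_eventually_within _ hlim hpos
        have h3 := h2.inv_tendsto_nhdsGT_zero
        refine h3.congr (fun n => ?_)
        simp [Pi.inv_apply, inv_div]
      have : Filter.Tendsto (fun n => ((F n).card : ℝ) / (g n : ℝ))
          (U : Filter ℕ) Filter.atTop := h1.mono_left hUatTop
      refine this.congr (fun n => ?_)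
      rw [hslice n, Set.ncard_coe_finset]
  refine ⟨hNFmem, ?_, ?_, ?_⟩
  · -- upward closed
    intro A B hA hAB hBNF
    refine ⟨hBNF, Filter.tendsto_atTop_mono (hmonoDiv A B hBNF hAB) hA.2⟩
  · -- coideal
    intro A B hAB
    have hANF : A ⊆ NF := fun p hp => hAB.1 (Set.mem_union_left _ hp)
    have hBNF : B ⊆ NF := fun p hp => hAB.1 (Set.mem_union_right _ hp)
    have key : ∀ n, (({x | (n,x) ∈ A ∪ B}).ncard : ℝ) ≤
        (({x | (n,x) ∈ A}).ncard : ℝ) + (({x | (n,x) ∈ B}).ncard : ℝ) := by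
      intro n
      have : ({x | (n,x) ∈ A ∪ B}) = {x | (n,x) ∈ A} ∪ {x | (n,x) ∈ B} := rfl
      rw [this]
      exact_mod_cast Set.ncard_union_le _ _
    rcases U.mem_or_compl_mem {n | ({x | (n,x) ∈ B}).ncard ≤ ({x | (n,x) ∈ A}).ncard}
      with hS | hS
    · left
      refine ⟨hANF, ?_⟩
      have h2 : Filter.Tendsto
          (fun n => (({x | (n,x) ∈ A ∪ B}).ncard : ℝ) / (g n : ℝ) / 2)
          (U : Filter ℕ) Filter.atTop := hAB.2.atTop_div_const two_pos
      refine Filter.tendsto_atTop_mono' _ ?_ h2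
      filter_upwards [hS] with n hn
      have h3 : (({x | (n,x) ∈ A ∪ B}).ncard : ℝ) ≤ 2 * (({x | (n,x) ∈ A}).ncard : ℝ) := by
        have := key n
        have hcast : (({x | (n,x) ∈ B}).ncard : ℝ) ≤ (({x | (n,x) ∈ A}).ncard : ℝ) := by
          exact_mod_cast hn
        linarith
      rw [div_div, div_le_div_iff₀ (mul_pos (hgpos n) two_pos) (hgpos n)]
      nlinarith [hgpos n]
    · right
      refine ⟨hBNF, ?_⟩
      have h2 : Filter.Tendsto
          (fun n => (({x | (n,x) ∈ A ∪ B}).ncard : ℝ) / (g n : ℝ) / 2)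
          (U : Filter ℕ) Filter.atTop := hAB.2.atTop_div_const two_pos
      refine Filter.tendsto_atTop_mono' _ ?_ h2
      filter_upwards [hS] with n hn
      have hn' : ({x | (n,x) ∈ A}).ncard ≤ ({x | (n,x) ∈ B}).ncard := by
        simp only [Set.mem_compl_iff, Set.mem_setOf_eq, not_le] at hn
        exact hn.le
      have h3 : (({x | (n,x) ∈ A ∪ B}).ncard : ℝ) ≤ 2 * (({x | (n,x) ∈ B}).ncard : ℝ) := by
        have := key n
        have hcast : (({x | (n,x) ∈ A}).ncard : ℝ) ≤ (({x | (n,x) ∈ B}).ncard : ℝ) := by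
          exact_mod_cast hn'
        linarith
      rw [div_div, div_le_div_iff₀ (mul_pos (hgpos n) two_pos) (hgpos n)]
      nlinarith [hgpos n]
  · -- selectivity
    intro A hdec hH
    have hmono : ∀ k j, k ≤ j → A j ⊆ A k := by
      intro k j hkj
      induction j with
      | zero => simp_all
      | succ j ih =>
        rcases Nat.lt_or_ge k (j+1) with h | h
        · exact (hdec j).trans (ih (Nat.lt_succ_iff.mp h))
        · have : k = j + 1 := le_antisymm hkj h
          subst this; exact subset_rfl
    set f : ℕ → ℕ → ℝ := fun k n => (({x | (n,x) ∈ A k}).ncard : ℝ) / (g n : ℝ) with hf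
    set C : ℕ → Set ℕ := fun k => {n | k < n ∧ (k:ℝ) ≤ f k n} with hC
    have hCU : ∀ k, C k ∈ U := by
      intro k
      have h1 : {n | k < n} ∈ U := hUatTop (Filter.mem_atTop (k+1))
      have h2 : {n | (k:ℝ) ≤ f k n} ∈ U := (hH k).2.eventually_ge_atTop (k:ℝ)
      exact U.toFilter.inter_sets h1 h2
    have hCdec : ∀ k, C (k+1) ⊆ C k := by
      intro k n hn
      refine ⟨lt_trans (Nat.lt_succ_self k) hn.1, ?_⟩
      have h1 : (k:ℝ) ≤ (k+1:ℕ) := by exact_mod_cast Nat.le_succ k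
      have h2 : f (k+1) n ≤ f k n :=
        hmonoDiv (A (k+1)) (A k) (hH k).1 (hdec k) n
      exact h1.trans (hn.2.trans h2)
    obtain ⟨B₀, hB₀U, hB₀diag⟩ := hsel C hCdec hCU
    set φ : ℕ → ℕ := fun n => sSup {k | k ∈ B₀ ∧ k < n} with hφ
    have hbdd : ∀ n, BddAbove {k | k ∈ B₀ ∧ k < n} := fun n =>
      ⟨n, fun k hk => hk.2.le⟩
    have hφ_ge : ∀ n k, k ∈ B₀ → k < n → k ≤ φ n := fun n k hk hkn =>
      le_csSup (hbdd n) ⟨hk, hkn⟩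
    have hφ_mem : ∀ n, ∀ k, k ∈ B₀ → k < n → φ n ∈ B₀ ∧ φ n < n := by
      intro n k hk hkn
      have hne : {k | k ∈ B₀ ∧ k < n}.Nonempty := ⟨k, hk, hkn⟩
      exact Nat.sSup_mem hne (hbdd n)
    set B : Set (ℕ × ℕ) := {p | p.1 ∈ B₀ ∧ p ∈ A (φ p.1)} with hB
    have hBNF : B ⊆ NF := fun p hp => (hH (φ p.1)).1 hp.2
    refine ⟨B, ⟨hBNF, ?_⟩, ?_⟩
    · -- tendsto
      rw [Filter.tendsto_atTop]
      intro M
      obtain ⟨N, hN⟩ := exists_nat_ge M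
      have hset : B₀ ∩ {n | N < n} ∈ U :=
        U.toFilter.inter_sets hB₀U (hUatTop (Filter.mem_atTop (N+1)))
      obtain ⟨k₀, hk₀B, hk₀N⟩ := U.nonempty_of_mem hset
      have hgoal : {n ∈ B₀ | k₀ < n} ⊆
          {n | M ≤ (({x | (n,x) ∈ B}).ncard : ℝ) / (g n : ℝ)} := by
        rintro n ⟨hnB₀, hk₀n⟩
        have hφn := hφ_mem n k₀ hk₀B hk₀n
        have hφge : k₀ ≤ φ n := hφ_ge n k₀ hk₀B hk₀n
        have hnC : n ∈ C (φ n) := hB₀diag (φ n) hφn.1 ⟨hnB₀, hφn.2⟩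
        have hslice : {x | (n,x) ∈ B} = {x | (n,x) ∈ A (φ n)} := by
          ext x
          simp only [hB, Set.mem_setOf_eq]
          exact ⟨fun h => h.2, fun h => ⟨hnB₀, h⟩⟩
        have : (φ n : ℝ) ≤ f (φ n) n := hnC.2
        rw [Set.mem_setOf_eq, hslice]
        calc M ≤ (N:ℝ) := hN
          _ ≤ (k₀:ℝ) := by exact_mod_cast hk₀N.le
          _ ≤ (φ n : ℝ) := by exact_mod_cast hφge
          _ ≤ f (φ n) n := this
      exact Filter.mem_of_superset
        (U.toFilter.inter_sets hB₀U (hUatTop (Filter.mem_atTop (k₀+1))))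
        (fun n hn => hgoal ⟨hn.1, hn.2⟩)
    · -- diagonalization
      rintro k ⟨x, hx⟩ p ⟨hpB, hkp⟩
      have hkB₀ : k ∈ B₀ := hx.1
      have hkφ : k ≤ φ p.1 := hφ_ge p.1 k hkB₀ hkp
      exact hmono k (φ p.1) hkφ hpB.2
end
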